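/- arXiv:1901.11450 — 5 statements merged into one kernel-verified Lean document; each statement's English description precedes it below -/
import Mathlib

section
/- (q-Lucas theorem) Let F be a field and q ∈ F a primitive ℓ-th root of unity with ℓ > 1. Write r = r₀ + r₁ℓ and s = s₀ + s₁ℓ with 0 ≤ r₀, s₀ ≤ ℓ−1. Then the Gaussian binomial coefficient satisfies [r choose s]_q = [r₀ choose s₀]_q · C(r₁, s₁), where C(r₁,s₁) is the ordinary binomial coefficient (interpreted in F). -/
/-- The Gaussian (q-)binomial coefficient, defined by the q-Pascal recursion
`[n+1 choose k+1]_q = q^(k+1) [n choose k+1]_q + [n choose k]_q`. -/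
def qbinom {F : Type*} [Field F] (q : F) : ℕ → ℕ → F
  | _, 0 => 1
  | 0, _ + 1 => 0
  | n + 1, k + 1 => q ^ (k + 1) * qbinom q n (k + 1) + qbinom q n k

section QLucasAux

variable {F : Type*} [Field F]

lemma qbinom_zero_right (q : F) (n : ℕ) : qbinom q n 0 = 1 := by
  cases n <;> rfl

lemma qbinom_succ_succ (q : F) (n k : ℕ) :
    qbinom q (n + 1) (k + 1) = q ^ (k + 1) * qbinom q n (k + 1) + qbinom q n k := rfl

lemma qbinom_of_lt (q : F) : ∀ n k : ℕ, n < k → qbinom q n k = 0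
  | 0, _ + 1, _ => rfl
  | n + 1, k + 1, h => by
    rw [qbinom_succ_succ, qbinom_of_lt q n (k + 1) (by omega),
      qbinom_of_lt q n k (by omega)]
    ring

lemma qbinom_self (q : F) : ∀ n, qbinom q n n = 1
  | 0 => rfl
  | n + 1 => by
    rw [qbinom_succ_succ, qbinom_of_lt q n (n + 1) (by omega), qbinom_self q n]
    ring

lemma qbinom_pascal2 (q : F) :
    ∀ n k : ℕ, qbinom q (n + 1) (k + 1) =
      qbinom q n (k + 1) + q ^ (n - k) * qbinom q n k
  | 0, 0 => by simp [qbinom]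
  | 0, k + 1 => by simp [qbinom]
  | n + 1, 0 => by
    rw [qbinom_succ_succ q (n + 1) 0]
    conv_lhs => rw [qbinom_pascal2 q n 0]
    conv_rhs => rw [qbinom_succ_succ q n 0]
    simp only [qbinom_zero_right]
    rw [show n + 1 - 0 = (n - 0) + 1 from by omega, pow_succ]
    ring
  | n + 1, k + 1 => by
    rcases le_or_gt (k + 1) n with hk | hk
    · -- main case: k + 1 ≤ n
      rw [show n + 1 - (k + 1) = n - k from by omega,
        qbinom_succ_succ q (n + 1) (k + 1), qbinom_pascal2 q n (k + 1)]
      conv_lhs => rw [qbinom_pascal2 q n k]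
      conv_rhs => rw [qbinom_succ_succ q n k]
      have hratio : q ^ (k + 1 + 1) * qbinom q n (k + 1 + 1) + qbinom q n (k + 1)
          = qbinom q n (k + 1 + 1) + q ^ (n - (k + 1)) * qbinom q n (k + 1) :=
        (qbinom_succ_succ q n (k + 1)).symm.trans (qbinom_pascal2 q n (k + 1))
      have hab : q ^ (k + 1 + 1) * q ^ (n - (k + 1)) = q ^ (n - k) * q ^ (k + 1) := by
        rw [← pow_add, ← pow_add]
        congr 1
        omega
      linear_combination hratio + qbinom q n (k + 1) * hab
    · -- degenerate case: n < k + 1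
      rcases eq_or_lt_of_le (Nat.succ_le_of_lt hk) with h | h
    -- h : n + 1 = k + 1 or n + 1 < k + 1
      · rw [← h, qbinom_self, qbinom_self, qbinom_of_lt q (n + 1) (n + 1 + 1) (by omega)]
        simp
      · rw [qbinom_of_lt q (n + 2) (k + 2) (by omega),
          qbinom_of_lt q (n + 1) (k + 2) (by omega),
          qbinom_of_lt q (n + 1) (k + 1) (by omega)]
        ring

lemma qbinom_ratio (q : F) (n k : ℕ) :
    (1 - q ^ (k + 1)) * qbinom q n (k + 1) = (1 - q ^ (n - k)) * qbinom q n k := by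
  have h1 : qbinom q (n + 1) (k + 1) = q ^ (k + 1) * qbinom q n (k + 1) + qbinom q n k := by
    cases n <;> rfl
  have h2 := qbinom_pascal2 q n k
  linear_combination h1 - h2

lemma qbinom_root_zero (q : F) (ℓ : ℕ) (hq : IsPrimitiveRoot q ℓ) (hℓ : 1 < ℓ) :
    ∀ k : ℕ, 0 < k → k < ℓ → qbinom q ℓ k = 0 := by
  intro k
  induction k with
  | zero => omega
  | succ k ih =>
    intro _ hkℓ
    have hr := qbinom_ratio q ℓ k
    have hne : (1 : F) - q ^ (k + 1) ≠ 0 := by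
      intro h
      exact (hq.pow_ne_one_of_pos_of_lt (by omega) hkℓ) (sub_eq_zero.mp h).symm
    have hz : (1 - q ^ (ℓ - k)) * qbinom q ℓ k = 0 := by
      rcases Nat.eq_zero_or_pos k with hk0 | hk0
      · subst hk0
        simp [qbinom_zero_right, hq.pow_eq_one]
      · rw [ih hk0 (by omega)]; ring
    have := hr.trans hz
    exact (mul_eq_zero.mp this).resolve_left hne

lemma qbinom_key (q : F) (ℓ : ℕ) (hq : IsPrimitiveRoot q ℓ) (hℓ : 1 < ℓ) :
    ∀ n k : ℕ, qbinom q (n + ℓ) k =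
      qbinom q n k + if ℓ ≤ k then qbinom q n (k - ℓ) else 0 := by
  intro n
  induction n with
  | zero =>
    intro k
    rcases Nat.eq_zero_or_pos k with rfl | hk0
    · simp [qbinom_zero_right, show ¬ ℓ ≤ 0 from by omega]
    rcases lt_trichotomy k ℓ with h | h | h
    · rw [show (0 + ℓ) = ℓ from by omega, qbinom_root_zero q ℓ hq hℓ k hk0 h,
        qbinom_of_lt q 0 k hk0, if_neg (by omega)]
      ring
    · subst h
      rw [show (0 + k) = k from by omega, qbinom_self, qbinom_of_lt q 0 k hk0,
        if_pos le_rfl, Nat.sub_self, qbinom_zero_right]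
      ring
    · rw [show (0 + ℓ) = ℓ from by omega, qbinom_of_lt q ℓ k h,
        qbinom_of_lt q 0 k hk0, if_pos (by omega), qbinom_of_lt q 0 (k - ℓ) (by omega)]
      ring
  | succ n ih =>
    intro k
    rcases Nat.eq_zero_or_pos k with rfl | hk0
    · simp [qbinom_zero_right, show ¬ ℓ ≤ 0 from by omega]
    obtain ⟨j, rfl⟩ : ∃ j, k = j + 1 := ⟨k - 1, by omega⟩
    rw [show n + 1 + ℓ = (n + ℓ) + 1 from by omega, qbinom_succ_succ, ih (j + 1), ih j,
      qbinom_succ_succ]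
    rcases le_or_gt ℓ j with hj | hj
    · rw [if_pos hj, if_pos (show ℓ ≤ j + 1 from by omega),
        if_pos (show ℓ ≤ j + 1 from by omega)]
      rw [show j + 1 - ℓ = (j - ℓ) + 1 from by omega, qbinom_succ_succ]
      have : q ^ (j + 1) * qbinom q n (j - ℓ + 1) =
          q ^ (j - ℓ + 1) * qbinom q n (j - ℓ + 1) := by
        rw [show j + 1 = (j - ℓ + 1) + ℓ from by omega, pow_add, hq.pow_eq_one, mul_one]
      rw [show j - ℓ + 1 = j + 1 - ℓ from by omega] at this ⊢
      rw [mul_add, this]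
      ring
    · rcases eq_or_lt_of_le (Nat.succ_le_of_lt hj) with h | h
      · -- ℓ = j + 1
        have hq1 : q ^ (j + 1) = 1 := by rw [show j + 1 = ℓ from h]; exact hq.pow_eq_one
        rw [if_pos (show ℓ ≤ j + 1 from by omega), if_pos (show ℓ ≤ j + 1 from by omega),
          if_neg (show ¬ ℓ ≤ j from by omega), show j + 1 - ℓ = 0 from by omega,
          qbinom_zero_right, qbinom_zero_right, hq1]
        ring
      · rw [if_neg (by omega), if_neg (by omega), if_neg (by omega)]
        ring

end QLucasAux

/-- The q-Lucas theorem: at a primitive ℓ-th root of unity,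
`[r₀ + r₁ℓ choose s₀ + s₁ℓ]_q = [r₀ choose s₀]_q * C(r₁, s₁)`. -/
theorem q_lucas {F : Type*} [Field F] (q : F) (ℓ : ℕ) (hq : IsPrimitiveRoot q ℓ)
    (hℓ : 1 < ℓ) (r₀ r₁ s₀ s₁ : ℕ) (hr₀ : r₀ ≤ ℓ - 1) (hs₀ : s₀ ≤ ℓ - 1) :
    qbinom q (r₀ + r₁ * ℓ) (s₀ + s₁ * ℓ) = qbinom q r₀ s₀ * (Nat.choose r₁ s₁ : F) := by
  have hr₀' : r₀ < ℓ := by omega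
  have hs₀' : s₀ < ℓ := by omega
  induction r₁ generalizing s₁ with
  | zero =>
    rcases Nat.eq_zero_or_pos s₁ with rfl | hs1
    · simp
    · rw [qbinom_of_lt q (r₀ + 0 * ℓ) (s₀ + s₁ * ℓ) (by nlinarith),
        Nat.choose_eq_zero_of_lt (by omega)]
      simp
  | succ r₁ ih =>
    rw [show r₀ + (r₁ + 1) * ℓ = (r₀ + r₁ * ℓ) + ℓ from by ring,
      qbinom_key q ℓ hq hℓ (r₀ + r₁ * ℓ) (s₀ + s₁ * ℓ)]
    rcases Nat.eq_zero_or_pos s₁ with rfl | hs1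
    · rw [if_neg (by omega : ¬ ℓ ≤ s₀ + 0 * ℓ), ih 0]
      simp
    · obtain ⟨t, rfl⟩ : ∃ t, s₁ = t + 1 := ⟨s₁ - 1, by omega⟩
      rw [if_pos (by nlinarith : ℓ ≤ s₀ + (t + 1) * ℓ),
        show s₀ + (t + 1) * ℓ - ℓ = s₀ + t * ℓ from by rw [add_mul, one_mul]; omega, ih (t + 1), ih t,
        Nat.choose_succ_succ, Nat.cast_add]
      ring
end

section
/- Let F be a field, q ∈ F a primitive ℓ-th root of unity with ℓ ≥ 1, and let A_q = F⟨x,y⟩/(xy − qyx) be the quantum plane. Then the center of A_q is the subalgebra generated by x^ℓ and y^ℓ; in particular x^ℓ and y^ℓ are central, they commute, and the center is isomorphic to a polynomial ring in two variables. -/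
/-- The defining relation `x y = q • (y x)` of the quantum plane. -/
inductive QPlaneRel (F : Type) [Field F] (q : F) :
    FreeAlgebra F (Fin 2) → FreeAlgebra F (Fin 2) → Prop
  | rel : QPlaneRel F q (FreeAlgebra.ι F 0 * FreeAlgebra.ι F 1)
      (q • (FreeAlgebra.ι F 1 * FreeAlgebra.ι F 0))

namespace QPC

noncomputable section

variable (F : Type) [Field F] (q : F)

abbrev A := RingQuot (QPlaneRel F q)

def xx : A F q := RingQuot.mkAlgHom F (QPlaneRel F q) (FreeAlgebra.ι F 0)

def yy : A F q := RingQuot.mkAlgHom F (QPlaneRel F q) (FreeAlgebra.ι F 1)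

def v (m : ℕ × ℕ) : A F q := xx F q ^ m.1 * yy F q ^ m.2

lemma rel : xx F q * yy F q = q • (yy F q * xx F q) := by
  have := RingQuot.mkAlgHom_rel F (QPlaneRel.rel (F := F) (q := q))
  simpa [xx, yy, map_mul, map_smul] using this

lemma yx (hq0 : q ≠ 0) : yy F q * xx F q = q⁻¹ • (xx F q * yy F q) := by
  rw [rel, smul_smul, inv_mul_cancel₀ hq0, one_smul]

lemma ypow_x (hq0 : q ≠ 0) (b : ℕ) :
    yy F q ^ b * xx F q = (q⁻¹) ^ b • (xx F q * yy F q ^ b) := by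
  induction b with
  | zero => simp
  | succ b ih =>
    calc yy F q ^ (b + 1) * xx F q = yy F q ^ b * (yy F q * xx F q) := by
          rw [pow_succ, mul_assoc]
      _ = q⁻¹ • (yy F q ^ b * xx F q * yy F q) := by
          rw [yx F q hq0, mul_smul_comm, ← mul_assoc]
      _ = q⁻¹ • ((q⁻¹ ^ b • (xx F q * yy F q ^ b)) * yy F q) := by rw [ih]
      _ = (q⁻¹) ^ (b + 1) • (xx F q * yy F q ^ (b + 1)) := by
          rw [smul_mul_assoc, smul_smul, mul_assoc, ← pow_succ]
          norm_num [pow_succ, mul_comm]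

lemma y_xpow (hq0 : q ≠ 0) (a : ℕ) :
    yy F q * xx F q ^ a = (q⁻¹) ^ a • (xx F q ^ a * yy F q) := by
  induction a with
  | zero => simp
  | succ a ih =>
    calc yy F q * xx F q ^ (a + 1) = (yy F q * xx F q) * xx F q ^ a := by
          rw [pow_succ', ← mul_assoc]
      _ = q⁻¹ • (xx F q * (yy F q * xx F q ^ a)) := by
          rw [yx F q hq0, smul_mul_assoc, mul_assoc]
      _ = q⁻¹ • (xx F q * (q⁻¹ ^ a • (xx F q ^ a * yy F q))) := by rw [ih]
      _ = (q⁻¹) ^ (a + 1) • (xx F q ^ (a + 1) * yy F q) := by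
          rw [mul_smul_comm, smul_smul, ← mul_assoc,
            show xx F q * xx F q ^ a = xx F q ^ a * xx F q from
              (pow_succ' _ _).symm.trans (pow_succ _ _), ← pow_succ, ← pow_succ']

lemma x_mul_v (m : ℕ × ℕ) : xx F q * v F q m = v F q (m.1 + 1, m.2) := by
  simp only [v, ← mul_assoc, ← pow_succ']

lemma v_mul_x (hq0 : q ≠ 0) (m : ℕ × ℕ) :
    v F q m * xx F q = (q⁻¹) ^ m.2 • v F q (m.1 + 1, m.2) := by
  simp only [v]
  rw [mul_assoc, ypow_x F q hq0, mul_smul_comm, ← mul_assoc, ← pow_succ]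

lemma v_mul_y (m : ℕ × ℕ) : v F q m * yy F q = v F q (m.1, m.2 + 1) := by
  simp only [v, mul_assoc, ← pow_succ]

lemma y_mul_v (hq0 : q ≠ 0) (m : ℕ × ℕ) :
    yy F q * v F q m = (q⁻¹) ^ m.1 • v F q (m.1, m.2 + 1) := by
  simp only [v]
  rw [← mul_assoc, y_xpow F q hq0, smul_mul_assoc, mul_assoc, ← pow_succ']

/-! ### A representation on `(ℕ × ℕ) →₀ F` -/

def Xop : ((ℕ × ℕ) →₀ F) →ₗ[F] ((ℕ × ℕ) →₀ F) :=
  Finsupp.lsum F fun m => q ^ m.2 • Finsupp.lsingle (m.1 + 1, m.2)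

def Yop : ((ℕ × ℕ) →₀ F) →ₗ[F] ((ℕ × ℕ) →₀ F) :=
  Finsupp.lsum F fun m => Finsupp.lsingle (m.1, m.2 + 1)

lemma Xop_single (m : ℕ × ℕ) (c : F) :
    Xop F q (Finsupp.single m c) = Finsupp.single (m.1 + 1, m.2) (q ^ m.2 * c) := by
  rw [Xop, Finsupp.lsum_single, LinearMap.smul_apply, Finsupp.lsingle_apply,
    Finsupp.smul_single, smul_eq_mul]

lemma Yop_single (m : ℕ × ℕ) (c : F) :
    Yop F (Finsupp.single m c) = Finsupp.single (m.1, m.2 + 1) c := by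
  rw [Yop, Finsupp.lsum_single, Finsupp.lsingle_apply]

def rho : A F q →ₐ[F] Module.End F ((ℕ × ℕ) →₀ F) :=
  RingQuot.liftAlgHom F ⟨FreeAlgebra.lift F ![Xop F q, Yop F], by
    rintro _ _ ⟨⟩
    simp only [map_mul, map_smul, FreeAlgebra.lift_ι_apply, Matrix.cons_val_zero,
      Matrix.cons_val_one, Matrix.head_cons]
    refine Finsupp.lhom_ext fun m c => ?_
    simp only [Module.End.mul_apply, LinearMap.smul_apply, Xop_single, Yop_single,
      Finsupp.smul_single]
    congr 1
    rw [smul_eq_mul, pow_succ]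
    ring⟩

lemma rho_x : rho F q (xx F q) = Xop F q := by
  rw [rho, xx, RingQuot.liftAlgHom_mkAlgHom_apply, FreeAlgebra.lift_ι_apply]
  simp

lemma rho_y : rho F q (yy F q) = Yop F := by
  rw [rho, yy, RingQuot.liftAlgHom_mkAlgHom_apply, FreeAlgebra.lift_ι_apply]
  simp

lemma Yop_pow (b : ℕ) : ((Yop F) ^ b) (Finsupp.single ((0 : ℕ), (0 : ℕ)) (1 : F))
    = Finsupp.single (0, b) 1 := by
  induction b with
  | zero => simp
  | succ b ih => rw [pow_succ', Module.End.mul_apply, ih, Yop_single]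

lemma Xop_pow (a b : ℕ) : ((Xop F q) ^ a) (Finsupp.single ((0 : ℕ), b) (1 : F))
    = Finsupp.single (a, b) (q ^ (a * b)) := by
  induction a with
  | zero => simp
  | succ a ih =>
    rw [pow_succ', Module.End.mul_apply, ih, Xop_single]
    congr 1
    rw [← pow_add]
    congr 1
    ring

lemma rho_v (m : ℕ × ℕ) :
    rho F q (v F q m) (Finsupp.single ((0 : ℕ), (0 : ℕ)) (1 : F))
    = Finsupp.single m (q ^ (m.1 * m.2)) := by
  rw [v, map_mul, map_pow, map_pow, rho_x, rho_y, Module.End.mul_apply, Yop_pow, Xop_pow]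

def Emap : A F q →ₗ[F] ((ℕ × ℕ) →₀ F) :=
  (LinearMap.applyₗ (Finsupp.single ((0 : ℕ), (0 : ℕ)) (1 : F))).comp (rho F q).toLinearMap

lemma lin_indep (hq0 : q ≠ 0) : LinearIndependent F (v F q) := by
  have hw : LinearIndependent F fun m : ℕ × ℕ =>
      Finsupp.single m (q ^ (m.1 * m.2)) := by
    have h := ((Finsupp.basisSingleOne (R := F) (ι := ℕ × ℕ)).unitsSMul
      (fun m => Units.mk0 (q ^ (m.1 * m.2)) (pow_ne_zero _ hq0))).linearIndependent
    convert h using 2 with m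
    simp [Module.Basis.unitsSMul_apply, Finsupp.smul_single]
  refine LinearIndependent.of_comp (Emap F q) ?_
  have : (Emap F q) ∘ (v F q) = fun m : ℕ × ℕ => Finsupp.single m (q ^ (m.1 * m.2)) := by
    funext m
    exact rho_v F q m
  rw [this]
  exact hw

lemma qp_induction {C : A F q → Prop} (h0 : ∀ r, C (algebraMap F (A F q) r))
    (hx : C (xx F q)) (hy : C (yy F q)) (hm : ∀ a b, C a → C b → C (a * b))
    (ha : ∀ a b, C a → C b → C (a + b)) (u : A F q) : C u := by
  obtain ⟨a, rfl⟩ := RingQuot.mkAlgHom_surjective F (QPlaneRel F q) u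
  induction a using FreeAlgebra.induction with
  | grade0 r => rw [AlgHom.commutes]; exact h0 r
  | grade1 i =>
    fin_cases i
    · exact hx
    · exact hy
  | mul a b iha ihb => rw [map_mul]; exact hm _ _ iha ihb
  | add a b iha ihb => rw [map_add]; exact ha _ _ iha ihb

lemma span_top (hq0 : q ≠ 0) : Submodule.span F (Set.range (v F q)) = ⊤ := by
  set S := Submodule.span F (Set.range (v F q)) with hS
  have h1 : (1 : A F q) ∈ S := by
    have : v F q (0, 0) = 1 := by simp [v]
    exact this ▸ Submodule.subset_span (Set.mem_range_self _)
  have hx : ∀ w ∈ S, w * xx F q ∈ S := by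
    intro w hw
    refine Submodule.span_induction (p := fun w _ => w * xx F q ∈ S) ?_ ?_ ?_ ?_ hw
    · rintro _ ⟨m, rfl⟩
      rw [v_mul_x F q hq0]
      exact S.smul_mem _ (Submodule.subset_span (Set.mem_range_self _))
    · simp
    · intro a b _ _ hha hhb; rw [add_mul]; exact S.add_mem hha hhb
    · intro r a _ hha; rw [smul_mul_assoc]; exact S.smul_mem r hha
  have hy : ∀ w ∈ S, w * yy F q ∈ S := by
    intro w hw
    refine Submodule.span_induction (p := fun w _ => w * yy F q ∈ S) ?_ ?_ ?_ ?_ hw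
    · rintro _ ⟨m, rfl⟩
      rw [v_mul_y]
      exact Submodule.subset_span (Set.mem_range_self _)
    · simp
    · intro a b _ _ hha hhb; rw [add_mul]; exact S.add_mem hha hhb
    · intro r a _ hha; rw [smul_mul_assoc]; exact S.smul_mem r hha
  have key : ∀ u : A F q, ∀ w ∈ S, w * u ∈ S := by
    intro u
    induction u using qp_induction with
    | h0 r =>
      intro w hw
      have : w * algebraMap F (A F q) r = r • w := by
        rw [← Algebra.commutes, ← Algebra.smul_def]
      rw [this]; exact S.smul_mem r hw
    | hx => exact hx
    | hy => exact hy
    | hm a b iha ihb => intro w hw; rw [← mul_assoc]; exact ihb _ (iha _ hw)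
    | ha a b iha ihb =>
      intro w hw; rw [mul_add]; exact S.add_mem (iha _ hw) (ihb _ hw)
  rw [eq_top_iff]
  intro u _
  simpa using key u 1 h1

def B (hq0 : q ≠ 0) : Module.Basis (ℕ × ℕ) F (A F q) :=
  Module.Basis.mk (lin_indep F q hq0) (span_top F q hq0).ge

@[simp] lemma B_apply (hq0 : q ≠ 0) (m : ℕ × ℕ) : B F q hq0 m = v F q m :=
  Module.Basis.mk_apply _ _ _

lemma B_repr_v (hq0 : q ≠ 0) (m : ℕ × ℕ) :
    (B F q hq0).repr (v F q m) = Finsupp.single m 1 := by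
  rw [← B_apply F q hq0, Module.Basis.repr_self]


/-! ### Coordinate operators -/

def coordOp (φ : ℕ × ℕ → F) (σ : ℕ × ℕ → ℕ × ℕ) :
    ((ℕ × ℕ) →₀ F) →ₗ[F] ((ℕ × ℕ) →₀ F) :=
  Finsupp.lsum F fun m => φ m • Finsupp.lsingle (σ m)

lemma coordOp_single (φ : ℕ × ℕ → F) (σ : ℕ × ℕ → ℕ × ℕ) (m : ℕ × ℕ) (c : F) :
    coordOp F φ σ (Finsupp.single m c) = Finsupp.single (σ m) (φ m * c) := by
  rw [coordOp, Finsupp.lsum_single, LinearMap.smul_apply, Finsupp.lsingle_apply,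
    Finsupp.smul_single, smul_eq_mul]

lemma coordOp_apply (φ : ℕ × ℕ → F) (σ : ℕ × ℕ → ℕ × ℕ) (hσ : Function.Injective σ)
    (c : (ℕ × ℕ) →₀ F) (a : ℕ × ℕ) :
    (coordOp F φ σ c) (σ a) = φ a * c a := by
  rw [coordOp, Finsupp.lsum_apply, Finsupp.sum_apply, Finsupp.sum]
  rw [Finset.sum_eq_single a]
  · rw [LinearMap.smul_apply, Finsupp.lsingle_apply, Finsupp.smul_apply,
      Finsupp.single_eq_same, smul_eq_mul]
  · intro b _ hba
    rw [LinearMap.smul_apply, Finsupp.lsingle_apply, Finsupp.smul_apply,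
      Finsupp.single_eq_of_ne' (fun h => hba (hσ h)), smul_zero]
  · intro ha
    rw [Finsupp.notMem_support_iff.mp ha]
    simp

lemma sigx_inj : Function.Injective (fun m : ℕ × ℕ => (m.1 + 1, m.2)) := by
  intro a b h
  simp only [Prod.mk.injEq] at h
  exact Prod.ext (by omega) h.2

lemma sigy_inj : Function.Injective (fun m : ℕ × ℕ => (m.1, m.2 + 1)) := by
  intro a b h
  simp only [Prod.mk.injEq] at h
  exact Prod.ext h.1 (by omega)

section reprlemmas

variable (hq0 : q ≠ 0)

lemma repr_op (L : A F q →ₗ[F] A F q) (φ : ℕ × ℕ → F) (σ : ℕ × ℕ → ℕ × ℕ)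
    (h : ∀ m, L (v F q m) = φ m • v F q (σ m)) (u : A F q) :
    (B F q hq0).repr (L u) = coordOp F φ σ ((B F q hq0).repr u) := by
  have hmap : ((B F q hq0).repr.toLinearMap.comp L)
      = (coordOp F φ σ).comp (B F q hq0).repr.toLinearMap := by
    refine Module.Basis.ext (B F q hq0) fun m => ?_
    simp only [LinearMap.coe_comp, Function.comp_apply, LinearEquiv.coe_coe,
      Module.Basis.repr_self]
    rw [B_apply, h m, map_smul, B_repr_v, coordOp_single, Finsupp.smul_single,
      smul_eq_mul, mul_one]
  exact LinearMap.congr_fun hmap u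

lemma central_support (hq0 : q ≠ 0) (ℓ : ℕ) (hq : IsPrimitiveRoot q ℓ) (u : A F q)
    (hu : u ∈ Subalgebra.center F (A F q)) (m : ℕ × ℕ)
    (hm : m ∈ ((B F q hq0).repr u).support) : ℓ ∣ m.1 ∧ ℓ ∣ m.2 := by
  set c := (B F q hq0).repr u with hc
  have hcm : c m ≠ 0 := Finsupp.mem_support_iff.mp hm
  have hx : xx F q * u = u * xx F q := Subalgebra.mem_center_iff.mp hu (xx F q)
  have hy : yy F q * u = u * yy F q := Subalgebra.mem_center_iff.mp hu (yy F q)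
  have e1 : (B F q hq0).repr (xx F q * u)
      = coordOp F (fun _ => 1) (fun m => (m.1 + 1, m.2)) c :=
    repr_op F q hq0 (LinearMap.mulLeft F (xx F q)) _ _
      (fun m => by rw [LinearMap.mulLeft_apply, x_mul_v, one_smul]) u
  have e2 : (B F q hq0).repr (u * xx F q)
      = coordOp F (fun m => q⁻¹ ^ m.2) (fun m => (m.1 + 1, m.2)) c :=
    repr_op F q hq0 (LinearMap.mulRight F (xx F q)) _ _
      (fun m => by rw [LinearMap.mulRight_apply, v_mul_x F q hq0]) u
  have e3 : (B F q hq0).repr (yy F q * u)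
      = coordOp F (fun m => q⁻¹ ^ m.1) (fun m => (m.1, m.2 + 1)) c :=
    repr_op F q hq0 (LinearMap.mulLeft F (yy F q)) _ _
      (fun m => by rw [LinearMap.mulLeft_apply, y_mul_v F q hq0]) u
  have e4 : (B F q hq0).repr (u * yy F q)
      = coordOp F (fun _ => 1) (fun m => (m.1, m.2 + 1)) c :=
    repr_op F q hq0 (LinearMap.mulRight F (yy F q)) _ _
      (fun m => by rw [LinearMap.mulRight_apply, v_mul_y, one_smul]) u
  constructor
  · have heq : coordOp F (fun m => q⁻¹ ^ m.1) (fun m => (m.1, m.2 + 1)) c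
        = coordOp F (fun _ => 1) (fun m => (m.1, m.2 + 1)) c := by
      rw [← e3, ← e4, hy]
    have h5 := coordOp_apply F (fun m : ℕ × ℕ => q⁻¹ ^ m.1) _ sigy_inj c m
    rw [heq, coordOp_apply F _ _ sigy_inj c m, one_mul] at h5
    have : q⁻¹ ^ m.1 = 1 := mul_right_cancel₀ hcm (h5.symm.trans (one_mul (c m)).symm)
    rw [inv_pow, inv_eq_one] at this
    exact (hq.pow_eq_one_iff_dvd m.1).mp this
  · have heq : coordOp F (fun _ => (1 : F)) (fun m => (m.1 + 1, m.2)) c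
        = coordOp F (fun m => q⁻¹ ^ m.2) (fun m => (m.1 + 1, m.2)) c := by
      rw [← e1, ← e2, hx]
    have h5 := coordOp_apply F (fun _ : ℕ × ℕ => (1 : F)) _ sigx_inj c m
    rw [heq, coordOp_apply F _ _ sigx_inj c m] at h5
    have : q⁻¹ ^ m.2 = 1 := mul_right_cancel₀ hcm h5
    rw [inv_pow, inv_eq_one] at this
    exact (hq.pow_eq_one_iff_dvd m.2).mp this

lemma xl_central (hq0 : q ≠ 0) (ℓ : ℕ) (hql : q ^ ℓ = 1) :
    (xx F q) ^ ℓ ∈ Subalgebra.center F (A F q) := by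
  rw [Subalgebra.mem_center_iff]
  intro b
  induction b using qp_induction F q with
  | h0 r => exact Algebra.commutes r _
  | hx => exact ((Commute.refl (xx F q)).pow_right ℓ).eq
  | hy => rw [y_xpow F q hq0 ℓ, inv_pow, hql, inv_one, one_smul]
  | hm a b iha ihb => rw [mul_assoc, ihb, ← mul_assoc, iha, mul_assoc]
  | ha a b iha ihb => rw [add_mul, iha, ihb, mul_add]

lemma yl_central (hq0 : q ≠ 0) (ℓ : ℕ) (hql : q ^ ℓ = 1) :
    (yy F q) ^ ℓ ∈ Subalgebra.center F (A F q) := by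
  rw [Subalgebra.mem_center_iff]
  intro b
  induction b using qp_induction F q with
  | h0 r => exact Algebra.commutes r _
  | hx =>
    have := ypow_x F q hq0 ℓ
    rw [inv_pow, hql, inv_one, one_smul] at this
    exact this.symm
  | hy => exact ((Commute.refl (yy F q)).pow_right ℓ).eq
  | hm a b iha ihb => rw [mul_assoc, ihb, ← mul_assoc, iha, mul_assoc]
  | ha a b iha ihb => rw [add_mul, iha, ihb, mul_add]

lemma e_inj (ℓ : ℕ) (hℓ : 1 ≤ ℓ) :
    Function.Injective (fun s : Fin 2 →₀ ℕ => ((ℓ * s 0, ℓ * s 1) : ℕ × ℕ)) := by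
  intro a b h
  simp only [Prod.mk.injEq] at h
  ext i
  fin_cases i
  · exact Nat.eq_of_mul_eq_mul_left (by omega) h.1
  · exact Nat.eq_of_mul_eq_mul_left (by omega) h.2

end reprlemmas

end

end QPC

/-- At a primitive ℓ-th root of unity, the center of the quantum plane
`A_q = F⟨x,y⟩/(xy - q yx)` is the subalgebra generated by `x^ℓ` and `y^ℓ`:
these elements are central, commute, and generate a polynomial ring in two variables. -/
theorem quantum_plane_center (F : Type) [Field F] (q : F) (ℓ : ℕ)
    (hq : IsPrimitiveRoot q ℓ) (hℓ : 1 ≤ ℓ) :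
    let x := RingQuot.mkAlgHom F (QPlaneRel F q) (FreeAlgebra.ι F 0)
    let y := RingQuot.mkAlgHom F (QPlaneRel F q) (FreeAlgebra.ι F 1)
    x ^ ℓ ∈ Subalgebra.center F (RingQuot (QPlaneRel F q)) ∧
    y ^ ℓ ∈ Subalgebra.center F (RingQuot (QPlaneRel F q)) ∧
    Commute (x ^ ℓ) (y ^ ℓ) ∧
    Subalgebra.center F (RingQuot (QPlaneRel F q))
      = Algebra.adjoin F ({x ^ ℓ, y ^ ℓ} : Set (RingQuot (QPlaneRel F q))) ∧
    Nonempty ((Subalgebra.center F (RingQuot (QPlaneRel F q))) ≃ₐ[F] MvPolynomial (Fin 2) F) := by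
  intro x y
  have hql : q ^ ℓ = 1 := hq.pow_eq_one
  have hq0 : q ≠ 0 := by
    intro h
    rw [h, zero_pow (by omega)] at hql
    exact zero_ne_one hql
  have hxx : x = QPC.xx F q := rfl
  have hyy : y = QPC.yy F q := rfl
  have h1 : x ^ ℓ ∈ Subalgebra.center F (RingQuot (QPlaneRel F q)) :=
    QPC.xl_central F q hq0 ℓ hql
  have h2 : y ^ ℓ ∈ Subalgebra.center F (RingQuot (QPlaneRel F q)) :=
    QPC.yl_central F q hq0 ℓ hql
  refine ⟨h1, h2, (Subalgebra.mem_center_iff.mp h1 (y ^ ℓ)).symm, ?_, ?_⟩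
  · apply le_antisymm
    · intro u hu
      have hrep : u = ((QPC.B F q hq0).repr u).sum fun m r => r • QPC.v F q m := by
        conv_lhs => rw [← (QPC.B F q hq0).linearCombination_repr u]
        rw [Finsupp.linearCombination_apply]
        exact Finsupp.sum_congr fun m _ => by rw [QPC.B_apply]
      rw [hrep, Finsupp.sum]
      refine Subalgebra.sum_mem _ fun m hm => ?_
      obtain ⟨⟨a, ha⟩, ⟨b, hb⟩⟩ := QPC.central_support F q hq0 ℓ hq u hu m hm
      refine Subalgebra.smul_mem _ ?_ _
      have hv : QPC.v F q m = (x ^ ℓ) ^ a * (y ^ ℓ) ^ b := by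
        rw [QPC.v, ha, hb, pow_mul, pow_mul, ← hxx, ← hyy]
      rw [hv]
      exact mul_mem (pow_mem (Algebra.subset_adjoin (by simp)) a)
        (pow_mem (Algebra.subset_adjoin (by simp)) b)
    · apply Algebra.adjoin_le
      rintro s hs
      rcases hs with rfl | hs
      · exact h1
      · rw [Set.mem_singleton_iff] at hs
        exact hs ▸ h2
  · set ψ : MvPolynomial (Fin 2) F →ₐ[F] Subalgebra.center F (RingQuot (QPlaneRel F q)) :=
      MvPolynomial.aeval (fun i : Fin 2 => if i = 0 then ⟨x ^ ℓ, h1⟩ else ⟨y ^ ℓ, h2⟩)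
      with hψdef
    set Φ : MvPolynomial (Fin 2) F →ₐ[F] RingQuot (QPlaneRel F q) :=
      (Subalgebra.center F (RingQuot (QPlaneRel F q))).val.comp ψ with hΦdef
    have hΦX0 : Φ (MvPolynomial.X 0) = x ^ ℓ := by
      rw [hΦdef, hψdef]
      simp
    have hΦX1 : Φ (MvPolynomial.X 1) = y ^ ℓ := by
      rw [hΦdef, hψdef]
      simp
    have hΦmon : ∀ (s : Fin 2 →₀ ℕ) (c : F),
        Φ (MvPolynomial.monomial s c) = c • QPC.v F q (ℓ * s 0, ℓ * s 1) := by
      intro s c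
      rw [MvPolynomial.monomial_eq, Finsupp.prod_fintype _ _ (fun i => pow_zero _),
        Fin.prod_univ_two, map_mul, map_mul, map_pow, map_pow, hΦX0, hΦX1,
        ← MvPolynomial.algebraMap_eq, AlgHom.commutes, ← Algebra.smul_def,
        QPC.v, ← pow_mul, ← pow_mul, ← hxx, ← hyy]
    set b := MvPolynomial.basisMonomials (Fin 2) F with hbdef
    set e : (Fin 2 →₀ ℕ) → ℕ × ℕ := fun s => (ℓ * s 0, ℓ * s 1) with hedef
    have he : Function.Injective e := QPC.e_inj ℓ hℓ
    have hT : ((QPC.B F q hq0).repr.toLinearMap ∘ₗ Φ.toLinearMap)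
        = (Finsupp.lmapDomain F F e ∘ₗ b.repr.toLinearMap) := by
      refine Module.Basis.ext b fun s => ?_
      have hbs : b s = MvPolynomial.monomial s 1 :=
        congrFun (MvPolynomial.coe_basisMonomials (Fin 2) F) s
      simp only [LinearMap.coe_comp, Function.comp_apply, LinearEquiv.coe_coe,
        AlgHom.toLinearMap_apply]
      rw [Module.Basis.repr_self, Finsupp.lmapDomain_apply, Finsupp.mapDomain_single,
        hbs, hΦmon, one_smul]
      exact QPC.B_repr_v F q hq0 (e s)
    have hPhi : ∀ p, Φ p
        = (QPC.B F q hq0).repr.symm (Finsupp.mapDomain e (b.repr p)) := by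
      intro p
      have h := LinearMap.congr_fun hT p
      simp only [LinearMap.coe_comp, Function.comp_apply, LinearEquiv.coe_coe,
        AlgHom.toLinearMap_apply, Finsupp.lmapDomain_apply] at h
      exact (LinearEquiv.eq_symm_apply _).mpr h
    have hΦinj : Function.Injective Φ := by
      intro p1 p2 hh
      rw [hPhi p1, hPhi p2] at hh
      exact b.repr.injective (Finsupp.mapDomain_injective he
        ((QPC.B F q hq0).repr.symm.injective hh))
    have hψinj : Function.Injective ψ := by
      intro p1 p2 hh
      refine hΦinj ?_
      rw [hΦdef]
      simp only [AlgHom.coe_comp, Function.comp_apply, hh]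
    have hψsurj : Function.Surjective ψ := by
      rintro ⟨u, hu⟩
      have hsupp : ↑((QPC.B F q hq0).repr u).support ⊆ Set.range e := by
        intro m hm
        obtain ⟨⟨a, ha⟩, ⟨bb, hb⟩⟩ := QPC.central_support F q hq0 ℓ hq u hu m hm
        set sab : Fin 2 →₀ ℕ := Finsupp.single 0 a + Finsupp.single 1 bb with hsab
        have ha0 : sab 0 = a := by
          rw [hsab]; simp
        have hb1 : sab 1 = bb := by
          rw [hsab]; simp
        refine ⟨sab, ?_⟩
        show (ℓ * sab 0, ℓ * sab 1) = m
        rw [ha0, hb1]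
        exact Prod.ext ha.symm hb.symm
      refine ⟨b.repr.symm (Finsupp.comapDomain e ((QPC.B F q hq0).repr u) he.injOn), ?_⟩
      apply Subtype.ext
      have hval : Φ (b.repr.symm
          (Finsupp.comapDomain e ((QPC.B F q hq0).repr u) he.injOn)) = u := by
        rw [hPhi, LinearEquiv.apply_symm_apply,
          Finsupp.mapDomain_comapDomain e he _ hsupp, LinearEquiv.symm_apply_apply]
      exact hval
    exact ⟨(AlgEquiv.ofBijective ψ ⟨hψinj, hψsurj⟩).symm⟩
end

section
/- (Hayashi's lemma, abstract form) Let R be a commutative ring, π ∈ R, and A an R-algebra such that the element π is a non-zero-divisor on A. Suppose z₁, z₂ ∈ A are such that [zᵢ, a] ∈ πA for all a ∈ A (i = 1, 2). Then for every a ∈ A, [a, [z₁, z₂]] ∈ π²A. -/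
/-- Hayashi's lemma, abstract form: if `π` is a non-zero-divisor on `A` and the
commutators of `z₁, z₂` with everything lie in `πA`, then commutators with
`[z₁,z₂]` lie in `π²A`. -/
theorem hayashi_lemma {R A : Type*} [CommRing R] [Ring A] [Algebra R A] (π : R)
    (hreg : ∀ a : A, π • a = 0 → a = 0)
    (z₁ z₂ : A)
    (h₁ : ∀ a : A, ∃ b : A, z₁ * a - a * z₁ = π • b)
    (h₂ : ∀ a : A, ∃ b : A, z₂ * a - a * z₂ = π • b)
    (a : A) :
    ∃ c : A, a * (z₁ * z₂ - z₂ * z₁) - (z₁ * z₂ - z₂ * z₁) * a = (π ^ 2) • c := by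
  obtain ⟨b₁, hb₁⟩ := h₁ a
  obtain ⟨b₂, hb₂⟩ := h₂ a
  obtain ⟨c₁, hc₁⟩ := h₂ b₁
  obtain ⟨c₂, hc₂⟩ := h₁ b₂
  refine ⟨c₁ - c₂, ?_⟩
  have key : (π ^ 2) • (c₁ - c₂) =
      z₂ * (π • b₁) - (π • b₁) * z₂ - (z₁ * (π • b₂) - (π • b₂) * z₁) := by
    rw [pow_two, mul_smul, smul_sub, ← hc₁, ← hc₂, smul_sub, smul_sub,
      smul_sub, mul_smul_comm, mul_smul_comm, smul_mul_assoc, smul_mul_assoc]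
  rw [key, ← hb₁, ← hb₂]
  noncomm_ring
end

section
/- Let F be a field, q ∈ F with q^ℓ = 1 for an integer ℓ ≥ 1, and let S_q = F⟨x₁,…,x_N⟩/(x_m x_n − q^{−1} x_n x_m for m > n) be the q-symmetric algebra. Then the elements x₁^ℓ, …, x_N^ℓ pairwise commute and lie in the center of S_q, and the subalgebra they generate is isomorphic to a (commutative) polynomial ring in N variables. -/
open MvPolynomial

/-- The defining relations `x_m x_n = q⁻¹ • (x_n x_m)` (for `m > n`) of the
q-symmetric algebra. -/
inductive QSymRel (F : Type) [Field F] (q : F) (N : ℕ) :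
    FreeAlgebra F (Fin N) → FreeAlgebra F (Fin N) → Prop
  | rel {m n : Fin N} (h : n < m) :
      QSymRel F q N (FreeAlgebra.ι F m * FreeAlgebra.ι F n)
        (q⁻¹ • (FreeAlgebra.ι F n * FreeAlgebra.ι F m))


section Aux
variable (F : Type) [Field F] (q : F) (N : ℕ)

/-- The twist automorphism scaling `X j` by `q⁻¹` for `j < i`. -/
noncomputable def qsTau (i : Fin N) :
    MvPolynomial (Fin N) F →ₐ[F] MvPolynomial (Fin N) F :=
  aeval (fun j => if j < i then q⁻¹ • X j else X j)

lemma qsTau_X (i j : Fin N) :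
    qsTau F q N i (X j) = if j < i then q⁻¹ • X j else X j := by
  simp [qsTau]

lemma qsTau_comm (i j : Fin N) :
    (qsTau F q N i).comp (qsTau F q N j) = (qsTau F q N j).comp (qsTau F q N i) := by
  apply MvPolynomial.algHom_ext
  intro k
  simp only [AlgHom.comp_apply, qsTau_X]
  by_cases h1 : k < i <;> by_cases h2 : k < j <;>
    simp [h1, h2, qsTau_X, map_smul, smul_comm]

/-- The operator `f ↦ X i * qsTau i f` on polynomials. -/
noncomputable def qsM (i : Fin N) :
    Module.End F (MvPolynomial (Fin N) F) :=
  (LinearMap.mulLeft F (X i)).comp (qsTau F q N i).toLinearMap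

lemma qsM_apply (i : Fin N) (f : MvPolynomial (Fin N) F) :
    qsM F q N i f = X i * qsTau F q N i f := rfl

lemma qsM_rel {m n : Fin N} (h : n < m) :
    qsM F q N m * qsM F q N n = q⁻¹ • (qsM F q N n * qsM F q N m) := by
  apply LinearMap.ext; intro f
  have hc := congrArg (fun φ => φ f) (qsTau_comm F q N m n)
  simp only [AlgHom.comp_apply] at hc
  simp only [Module.End.mul_apply, LinearMap.smul_apply, qsM_apply, map_mul,
    qsTau_X, if_pos h, if_neg (not_lt.mpr h.le), map_smul]
  rw [hc]
  rw [smul_mul_assoc, mul_smul_comm]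
  ring_nf


/-- `qsTau i` iterated `k` times. -/
noncomputable def qsTauK (k : ℕ) (i : Fin N) :
    MvPolynomial (Fin N) F →ₐ[F] MvPolynomial (Fin N) F :=
  aeval (fun j => if j < i then (q⁻¹) ^ k • X j else X j)

lemma qsTauK_X (k : ℕ) (i j : Fin N) :
    qsTauK F q N k i (X j) = if j < i then (q⁻¹) ^ k • X j else X j := by
  simp [qsTauK]

lemma qsTauK_zero (i : Fin N) : qsTauK F q N 0 i = AlgHom.id F _ := by
  apply MvPolynomial.algHom_ext
  intro j
  simp [qsTauK_X]

lemma qsTauK_comp_tau (k : ℕ) (i : Fin N) :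
    (qsTauK F q N k i).comp (qsTau F q N i) = qsTauK F q N (k + 1) i := by
  apply MvPolynomial.algHom_ext
  intro j
  by_cases hj : j < i <;>
    simp [qsTau_X, qsTauK_X, hj, map_smul, smul_smul, pow_succ, mul_comm]

lemma qsM_pow (k : ℕ) (i : Fin N) (f : MvPolynomial (Fin N) F) :
    (qsM F q N i ^ k) f = X i ^ k * qsTauK F q N k i f := by
  induction k generalizing f with
  | zero => simp [qsTauK_zero]
  | succ k ih =>
    have hc := congrArg (fun φ => φ f) (qsTauK_comp_tau F q N k i)
    simp only [AlgHom.comp_apply] at hc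
    rw [pow_succ, Module.End.mul_apply, qsM_apply, ih, map_mul, qsTauK_X,
      if_neg (lt_irrefl i), hc, pow_succ]
    ring

lemma qsM_pow_of_root (ℓ : ℕ) (hq : q ^ ℓ = 1) (i : Fin N)
    (f : MvPolynomial (Fin N) F) :
    (qsM F q N i ^ ℓ) f = X i ^ ℓ * f := by
  rw [qsM_pow]
  congr 1
  have h1 : (q⁻¹ : F) ^ ℓ = 1 := by rw [inv_pow, hq, inv_one]
  have : qsTauK F q N ℓ i = AlgHom.id F _ := by
    apply MvPolynomial.algHom_ext
    intro j
    simp [qsTauK_X, h1]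
  rw [this]; rfl

/-- The representation of the q-symmetric algebra on polynomials. -/
noncomputable def qsRep :
    RingQuot (QSymRel F q N) →ₐ[F] Module.End F (MvPolynomial (Fin N) F) :=
  RingQuot.liftAlgHom F ⟨FreeAlgebra.lift F (qsM F q N), by
    rintro a b ⟨h⟩
    simp only [map_mul, map_smul, FreeAlgebra.lift_ι_apply]
    exact qsM_rel F q N h⟩

lemma qsRep_x (i : Fin N) :
    qsRep F q N (RingQuot.mkAlgHom F (QSymRel F q N) (FreeAlgebra.ι F i))
      = qsM F q N i := by
  rw [qsRep, RingQuot.liftAlgHom_mkAlgHom_apply, FreeAlgebra.lift_ι_apply]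

lemma expand_eq_mapDomain (ℓ : ℕ) (hℓ : 1 ≤ ℓ) (p : MvPolynomial (Fin N) F) :
    expand ℓ p = AddMonoidAlgebra.mapDomain (fun d => ℓ • d) p := by
  induction p using MvPolynomial.induction_on' with
  | monomial d r =>
    have hrhs : AddMonoidAlgebra.mapDomain (fun d => ℓ • d) (monomial d r : MvPolynomial (Fin N) F)
        = monomial (ℓ • d) r := by
      rw [show (monomial d r : MvPolynomial (Fin N) F) = AddMonoidAlgebra.single d r from
        (single_eq_monomial d r).symm, AddMonoidAlgebra.mapDomain_single, single_eq_monomial]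
    rw [hrhs, expand_monomial, monomial_eq]
  | add p q' ihp ihq => rw [map_add, AddMonoidAlgebra.mapDomain_add, ihp, ihq]

lemma expand_inj (ℓ : ℕ) (hℓ : 1 ≤ ℓ) :
    Function.Injective (expand ℓ : MvPolynomial (Fin N) F →ₐ[F] _) := by
  intro p p' h
  rw [expand_eq_mapDomain F N ℓ hℓ, expand_eq_mapDomain F N ℓ hℓ] at h
  have hinj : Function.Injective (fun d : Fin N →₀ ℕ => ℓ • d) := by
    intro a b hab
    ext i
    have := congrArg (fun v => v i) hab
    simp only [Finsupp.smul_apply, smul_eq_mul] at this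
    exact Nat.eq_of_mul_eq_mul_left hℓ this
  exact AddMonoidAlgebra.mapDomain_injective hinj h

end Aux

/-- If `q^ℓ = 1` then the ℓ-th powers of the generators of the q-symmetric algebra
are central, pairwise commute, and generate a polynomial ring in `N` variables. -/
theorem qsym_frobenius_center (F : Type) [Field F] (q : F) (ℓ N : ℕ)
    (hq : q ^ ℓ = 1) (hℓ : 1 ≤ ℓ) :
    let x : Fin N → RingQuot (QSymRel F q N) :=
      fun i => RingQuot.mkAlgHom F (QSymRel F q N) (FreeAlgebra.ι F i)
    (∀ i, x i ^ ℓ ∈ Subalgebra.center F (RingQuot (QSymRel F q N))) ∧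
    (∀ i j, Commute (x i ^ ℓ) (x j ^ ℓ)) ∧
    Nonempty ((Algebra.adjoin F (Set.range fun i => x i ^ ℓ)) ≃ₐ[F] MvPolynomial (Fin N) F) := by
  intro x
  have hql : (q⁻¹ : F) ^ ℓ = 1 := by rw [inv_pow, hq, inv_one]
  -- the defining relation in the quotient
  have hrel : ∀ {m n : Fin N}, n < m → x m * x n = q⁻¹ • (x n * x m) := by
    intro m n h
    have := RingQuot.mkAlgHom_rel F (QSymRel.rel (F := F) (q := q) (N := N) h)
    simpa only [map_mul, map_smul] using this
  have hpowl : ∀ {m n : Fin N}, n < m → ∀ k, x m ^ k * x n = (q⁻¹) ^ k • (x n * x m ^ k) := by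
    intro m n h k
    induction k with
    | zero => simp [mul_comm]
    | succ k ih =>
      rw [pow_succ, mul_assoc, hrel h, mul_smul_comm, ← mul_assoc, ih,
        smul_mul_assoc, smul_smul]
      simp [pow_succ, mul_assoc, mul_comm]
  have hpowr : ∀ {m n : Fin N}, n < m → ∀ k, x m * x n ^ k = (q⁻¹) ^ k • (x n ^ k * x m) := by
    intro m n h k
    induction k with
    | zero => simp [mul_comm]
    | succ k ih =>
      rw [pow_succ', ← mul_assoc, hrel h, smul_mul_assoc, mul_assoc, ih,
        mul_smul_comm, smul_smul]
      simp [pow_succ', mul_assoc, mul_comm]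
  have hgen : ∀ i j : Fin N, Commute (x i ^ ℓ) (x j) := by
    intro i j
    rcases lt_trichotomy i j with hij | hij | hij
    · have := hpowr hij ℓ
      rw [hql, one_smul] at this
      exact this.symm
    · subst hij; exact (Commute.refl (x i)).pow_left ℓ
    · have := hpowl hij ℓ
      rw [hql, one_smul] at this
      exact this
  have hcentral : ∀ i, x i ^ ℓ ∈ Subalgebra.center F (RingQuot (QSymRel F q N)) := by
    intro i
    rw [Subalgebra.mem_center_iff]
    intro b
    obtain ⟨z, rfl⟩ := RingQuot.mkAlgHom_surjective F (QSymRel F q N) b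
    induction z using FreeAlgebra.induction with
    | grade0 r => rw [AlgHom.commutes]; exact Algebra.commutes r _
    | grade1 j => exact (hgen i j).symm
    | mul a b iha ihb => rw [map_mul, mul_assoc, ihb, ← mul_assoc, iha, mul_assoc]
    | add a b iha ihb => rw [map_add, add_mul, iha, ihb, mul_add]
  refine ⟨hcentral, fun i j => (Subalgebra.mem_center_iff.mp (hcentral j)) _, ?_⟩
  -- the adjoined subalgebra is commutative
  have hcomm : ∀ a ∈ (Set.range fun i => x i ^ ℓ), ∀ b ∈ (Set.range fun i => x i ^ ℓ),
      a * b = b * a := by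
    rintro a ⟨i, rfl⟩ b hb
    exact (Subalgebra.mem_center_iff.mp (hcentral i) b).symm
  letI : CommRing (Algebra.adjoin F (Set.range fun i => x i ^ ℓ)) :=
    Algebra.adjoinCommRingOfComm F hcomm
  let g : Fin N → (Algebra.adjoin F (Set.range fun i => x i ^ ℓ)) :=
    fun i => ⟨x i ^ ℓ, Algebra.subset_adjoin ⟨i, rfl⟩⟩
  let ψ : MvPolynomial (Fin N) F →ₐ[F] (Algebra.adjoin F (Set.range fun i => x i ^ ℓ)) :=
    aeval g
  have hsurj : Function.Surjective ψ := by
    intro a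
    have key : ∀ r (_ : r ∈ Algebra.adjoin F (Set.range fun i => x i ^ ℓ)),
        ∃ p, ((ψ p : _) : RingQuot (QSymRel F q N)) = r := by
      intro r hr
      induction hr using Algebra.adjoin_induction with
      | mem r hr =>
        obtain ⟨i, rfl⟩ := hr
        exact ⟨X i, by simp [ψ, g]⟩
      | algebraMap r => exact ⟨C r, by simp [ψ]⟩
      | add r s hr hs ihr ihs =>
        obtain ⟨p, hp⟩ := ihr; obtain ⟨p', hp'⟩ := ihs
        exact ⟨p + p', by rw [map_add]; push_cast [hp, hp']; ring⟩
      | mul r s hr hs ihr ihs =>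
        obtain ⟨p, hp⟩ := ihr; obtain ⟨p', hp'⟩ := ihs
        exact ⟨p * p', by rw [map_mul]; push_cast [hp, hp']; ring⟩
    obtain ⟨p, hp⟩ := key a a.2
    exact ⟨p, Subtype.ext hp⟩
  have key : ∀ p : MvPolynomial (Fin N) F,
      qsRep F q N ((ψ p : _) : RingQuot (QSymRel F q N)) 1 = expand ℓ p := by
    intro p
    induction p using MvPolynomial.induction_on with
    | C r =>
      rw [show (ψ (C r) : RingQuot (QSymRel F q N))
          = algebraMap F (RingQuot (QSymRel F q N)) r by
        simp [ψ]]
      rw [AlgHom.commutes]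
      simp [Module.algebraMap_end_apply, smul_eq_C_mul]
    | add p p' ihp ihp' =>
      rw [map_add]
      push_cast
      rw [map_add, LinearMap.add_apply, ihp, ihp', map_add]
    | mul_X p i ih =>
      have hxcoe : ((ψ (p * X i) : _) : RingQuot (QSymRel F q N))
          = x i ^ ℓ * (ψ p : _) := by
        rw [map_mul]
        push_cast
        have : (ψ (X i) : RingQuot (QSymRel F q N)) = x i ^ ℓ := by simp [ψ, g]
        rw [this]
        exact Subalgebra.mem_center_iff.mp (hcentral i) _
      rw [hxcoe, map_mul, map_pow, Module.End.mul_apply, ih, qsRep_x,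
        qsM_pow_of_root F q N ℓ hq, map_mul, expand_X, mul_comm]
  have hinj : Function.Injective ψ := by
    intro p p' h
    apply expand_inj F N ℓ hℓ
    rw [← key p, ← key p', h]
  exact ⟨(AlgEquiv.ofBijective ψ ⟨hinj, hsurj⟩).symm⟩
end

section
/- Let R be a ring, q a central unit of R, and suppose x, ∂ ∈ R satisfy ∂x = q² x∂ + q. Define the R-module V = ⊕_{k=0}^{ℓ−1} F·v_k over a field F where q ∈ F is a primitive ℓ-th root of unity with ℓ > 1 odd, with actions x·v_k = v_{k+1} (indices k < ℓ−1), x·v_{ℓ−1} = 0, and ∂·v_k = q·(Σ_{j=0}^{k−1} q^{2j})·v_{k−1} (with ∂·v₀ = 0). Then these formulas define a module over the F-algebra F⟨x,∂⟩/(∂x − q²x∂ − q), and this module is simple (has no proper nonzero submodules). -/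
section QWeylAux
variable {F : Type} [Field F] {ℓ : ℕ} {q : F}

lemma qweyl_q2_ne_one (hq : IsPrimitiveRoot q ℓ) (hℓ : 1 < ℓ) (hodd : Odd ℓ) :
    q ^ 2 ≠ 1 := by
  intro h
  have hd := (hq.pow_eq_one_iff_dvd 2).mp h
  have := Nat.le_of_dvd (by norm_num) hd
  obtain ⟨m, hm⟩ := hodd
  omega

lemma qweyl_sum_ne (hq : IsPrimitiveRoot q ℓ) (hℓ : 1 < ℓ) (hodd : Odd ℓ)
    {k : ℕ} (hk0 : 0 < k) (hkℓ : k < ℓ) :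
    ∑ t ∈ Finset.range k, q ^ (2 * t) ≠ 0 := by
  have h2 : q ^ 2 ≠ 1 := qweyl_q2_ne_one hq hℓ hodd
  have : ∑ t ∈ Finset.range k, q ^ (2 * t) = ((q ^ 2) ^ k - 1) / (q ^ 2 - 1) := by
    rw [← geom_sum_eq h2]
    exact Finset.sum_congr rfl fun t _ => by rw [pow_mul]
  rw [this]
  apply div_ne_zero
  · rw [sub_ne_zero, ← pow_mul]
    intro hone
    have hd := (hq.pow_eq_one_iff_dvd (2 * k)).mp hone
    obtain ⟨m, hm⟩ := hodd
    have hcop : Nat.Coprime ℓ 2 :=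
      Nat.coprime_comm.mp ((Nat.prime_two.coprime_iff_not_dvd).mpr (by omega))
    have := Nat.le_of_dvd hk0 (hcop.dvd_of_dvd_mul_left hd)
    omega
  · rw [sub_ne_zero]; exact h2

lemma qweyl_sum_zero (hq : IsPrimitiveRoot q ℓ) (hℓ : 1 < ℓ) (hodd : Odd ℓ) :
    ∑ t ∈ Finset.range ℓ, q ^ (2 * t) = 0 := by
  obtain ⟨m, hm⟩ := hodd
  have hcop : Nat.Coprime 2 ℓ := (Nat.prime_two.coprime_iff_not_dvd).mpr (by omega)
  have h2 : IsPrimitiveRoot (q ^ 2) ℓ := hq.pow_of_coprime 2 hcop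
  have := h2.geom_sum_eq_zero hℓ
  rw [← this]
  exact Finset.sum_congr rfl fun t _ => by rw [pow_mul]

lemma qweyl_sum_rec (q : F) (k : ℕ) :
    ∑ t ∈ Finset.range (k + 1), q ^ (2 * t)
      = q ^ 2 * ∑ t ∈ Finset.range k, q ^ (2 * t) + 1 := by
  rw [Finset.sum_range_succ', Finset.mul_sum]
  simp only [mul_zero, pow_zero]
  congr 1
  exact Finset.sum_congr rfl fun t _ => by ring

lemma qweyl_mat_rel (hq : IsPrimitiveRoot q ℓ) (hℓ : 1 < ℓ) (hodd : Odd ℓ)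
    (Xmat Pmat : Matrix (Fin ℓ) (Fin ℓ) F)
    (hX : ∀ i j, Xmat i j = if (i : ℕ) = (j : ℕ) + 1 then 1 else 0)
    (hP : ∀ i j, Pmat i j = if (j : ℕ) = (i : ℕ) + 1
        then q * ∑ t ∈ Finset.range ((i : ℕ) + 1), q ^ (2 * t) else 0) :
    Pmat * Xmat = q ^ 2 • (Xmat * Pmat) + q • (1 : Matrix (Fin ℓ) (Fin ℓ) F) := by
  have hPX : ∀ i j : Fin ℓ, (Pmat * Xmat) i j =
      if (i:ℕ) = (j:ℕ) ∧ (i:ℕ) + 1 < ℓ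
        then q * ∑ t ∈ Finset.range ((i:ℕ)+1), q ^ (2*t) else 0 := by
    intro i j
    rw [Matrix.mul_apply]
    by_cases h : (i:ℕ) + 1 < ℓ
    · rw [Finset.sum_eq_single (⟨(i:ℕ)+1, h⟩ : Fin ℓ)]
      · rw [hP, hX]
        simp only [Fin.val_mk]
        rw [if_pos trivial]
        by_cases hij : (i:ℕ) = (j:ℕ)
        · rw [if_pos (by omega), if_pos ⟨hij, h⟩, mul_one]
        · rw [if_neg (by omega), if_neg (by tauto), mul_zero]
      · intro b _ hb
        rw [hP, if_neg, zero_mul]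
        intro hb'
        exact hb (Fin.ext hb')
      · intro hmem; exact absurd (Finset.mem_univ _) hmem
    · rw [if_neg (by tauto)]
      apply Finset.sum_eq_zero
      intro k _
      rw [hP, if_neg, zero_mul]
      intro hk
      exact h (hk ▸ k.isLt)
  have hXP : ∀ i j : Fin ℓ, (Xmat * Pmat) i j =
      if (i:ℕ) = (j:ℕ) ∧ 0 < (i:ℕ)
        then q * ∑ t ∈ Finset.range (i:ℕ), q ^ (2*t) else 0 := by
    intro i j
    rw [Matrix.mul_apply]
    by_cases h : 0 < (i:ℕ)
    · have hlt : (i:ℕ) - 1 < ℓ := lt_of_le_of_lt (Nat.pred_le _) i.isLt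
      rw [Finset.sum_eq_single (⟨(i:ℕ)-1, hlt⟩ : Fin ℓ)]
      · rw [hX, hP]
        simp only [Fin.val_mk]
        rw [if_pos (by omega), one_mul]
        have h2 : (i:ℕ) - 1 + 1 = (i:ℕ) := by omega
        rw [h2]
        by_cases hij : (i:ℕ) = (j:ℕ)
        · rw [if_pos (by omega), if_pos ⟨hij, h⟩]
        · rw [if_neg (by omega), if_neg (by tauto)]
      · intro b _ hb
        rw [hX, if_neg, zero_mul]
        intro hb'
        exact hb (Fin.ext (show (b:ℕ) = (i:ℕ) - 1 by omega))
      · intro hmem; exact absurd (Finset.mem_univ _) hmem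
    · rw [if_neg (by tauto)]
      apply Finset.sum_eq_zero
      intro k _
      rw [hX, if_neg (by omega), zero_mul]
  ext i j
  rw [Matrix.add_apply, Matrix.smul_apply, Matrix.smul_apply, Matrix.one_apply,
    hPX, hXP]
  simp only [smul_eq_mul]
  by_cases hij : (i:ℕ) = (j:ℕ)
  · rw [if_pos (Fin.ext hij), mul_one]
    by_cases h0 : 0 < (i:ℕ)
    · by_cases h1 : (i:ℕ) + 1 < ℓ
      · rw [if_pos ⟨hij, h1⟩, if_pos ⟨hij, h0⟩, qweyl_sum_rec]
        ring
      · rw [if_neg (by tauto), if_pos ⟨hij, h0⟩]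
        have h2 : (i:ℕ) + 1 = ℓ := by have := i.isLt; omega
        have key : q ^ 2 * (q * ∑ t ∈ Finset.range (i:ℕ), q^(2*t)) + q
            = q * ∑ t ∈ Finset.range ((i:ℕ)+1), q^(2*t) := by
          rw [qweyl_sum_rec]; ring
        rw [key, h2, qweyl_sum_zero hq hℓ hodd, mul_zero]
    · have hi0 : (i:ℕ) = 0 := by omega
      rw [if_pos ⟨hij, by omega⟩, if_neg (by tauto), hi0]
      simp
  · rw [if_neg (fun h => hij (congrArg Fin.val h)), if_neg (by tauto),
      if_neg (by tauto)]
    simp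

end QWeylAux


variable {F : Type} [Field F] {ℓ : ℕ} {q : F}

lemma qweyl_T_app (Xmat : Matrix (Fin ℓ) (Fin ℓ) F)
    (hX : ∀ i j, Xmat i j = if (i : ℕ) = (j : ℕ) + 1 then 1 else 0)
    (w : Fin ℓ → F) (i j : Fin ℓ) (hij : (i:ℕ) = (j:ℕ) + 1) :
    Matrix.toLin' Xmat w i = w j := by
  rw [Matrix.toLin'_apply]
  show ∑ k, Xmat i k * w k = w j
  rw [Finset.sum_eq_single j]
  · rw [hX, if_pos hij, one_mul]
  · intro b _ hb
    rw [hX, if_neg, zero_mul]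
    intro hb'
    exact hb (Fin.ext (by omega))
  · intro hmem; exact absurd (Finset.mem_univ _) hmem

lemma qweyl_T_app0 (Xmat : Matrix (Fin ℓ) (Fin ℓ) F)
    (hX : ∀ i j, Xmat i j = if (i : ℕ) = (j : ℕ) + 1 then 1 else 0)
    (w : Fin ℓ → F) (i : Fin ℓ) (hi : (i:ℕ) = 0) :
    Matrix.toLin' Xmat w i = 0 := by
  rw [Matrix.toLin'_apply]
  show ∑ k, Xmat i k * w k = 0
  apply Finset.sum_eq_zero
  intro k _
  rw [hX, if_neg (by omega), zero_mul]

lemma qweyl_D_app (Pmat : Matrix (Fin ℓ) (Fin ℓ) F)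
    (hP : ∀ i j, Pmat i j = if (j : ℕ) = (i : ℕ) + 1
        then q * ∑ t ∈ Finset.range ((i : ℕ) + 1), q ^ (2 * t) else 0)
    (w : Fin ℓ → F) (i j : Fin ℓ) (hij : (j:ℕ) = (i:ℕ) + 1) :
    Matrix.toLin' Pmat w i
      = (q * ∑ t ∈ Finset.range ((i:ℕ) + 1), q ^ (2 * t)) * w j := by
  rw [Matrix.toLin'_apply]
  show ∑ k, Pmat i k * w k = _
  rw [Finset.sum_eq_single j]
  · rw [hP, if_pos hij]
  · intro b _ hb
    rw [hP, if_neg, zero_mul]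
    intro hb'
    exact hb (Fin.ext (by omega))
  · intro hmem; exact absurd (Finset.mem_univ _) hmem

lemma qweyl_D_app0 (Pmat : Matrix (Fin ℓ) (Fin ℓ) F)
    (hP : ∀ i j, Pmat i j = if (j : ℕ) = (i : ℕ) + 1
        then q * ∑ t ∈ Finset.range ((i : ℕ) + 1), q ^ (2 * t) else 0)
    (w : Fin ℓ → F) (i : Fin ℓ) (hi : (i:ℕ) + 1 = ℓ) :
    Matrix.toLin' Pmat w i = 0 := by
  rw [Matrix.toLin'_apply]
  show ∑ k, Pmat i k * w k = 0
  apply Finset.sum_eq_zero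
  intro k _
  rw [hP, if_neg (by have := k.isLt; omega), zero_mul]




/-- The defining relation `∂ x = q² • (x ∂) + q • 1` of the q-Weyl algebra, with
`x = ι 0` and `∂ = ι 1`. -/
inductive QWeylRel (F : Type) [Field F] (q : F) :
    FreeAlgebra F (Fin 2) → FreeAlgebra F (Fin 2) → Prop
  | rel : QWeylRel F q (FreeAlgebra.ι F 1 * FreeAlgebra.ι F 0)
      (q ^ 2 • (FreeAlgebra.ι F 0 * FreeAlgebra.ι F 1) + q • 1)

/-- For `q` a primitive ℓ-th root of unity (`ℓ > 1` odd), the formulas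
`x·v_k = v_{k+1}` (with `x·v_{ℓ-1} = 0`) and `∂·v_k = q (Σ_{j<k} q^{2j}) v_{k-1}`
define a module over the q-Weyl algebra `F⟨x,∂⟩/(∂x − q²x∂ − q)`, and this module
is simple. -/
theorem qweyl_simple_module (F : Type) [Field F] (ℓ : ℕ) (q : F)
    (hq : IsPrimitiveRoot q ℓ) (hℓ : 1 < ℓ) (hodd : Odd ℓ)
    (Xmat Pmat : Matrix (Fin ℓ) (Fin ℓ) F)
    (hX : ∀ i j, Xmat i j = if (i : ℕ) = (j : ℕ) + 1 then 1 else 0)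
    (hP : ∀ i j, Pmat i j = if (j : ℕ) = (i : ℕ) + 1
        then q * ∑ t ∈ Finset.range ((i : ℕ) + 1), q ^ (2 * t) else 0) :
    (∃ ρ : RingQuot (QWeylRel F q) →ₐ[F] Module.End F (Fin ℓ → F),
        ρ (RingQuot.mkAlgHom F (QWeylRel F q) (FreeAlgebra.ι F 0)) = Matrix.toLin' Xmat ∧
        ρ (RingQuot.mkAlgHom F (QWeylRel F q) (FreeAlgebra.ι F 1)) = Matrix.toLin' Pmat) ∧
    (∀ U : Submodule F (Fin ℓ → F),
        (∀ w ∈ U, Matrix.toLin' Xmat w ∈ U) → (∀ w ∈ U, Matrix.toLin' Pmat w ∈ U) →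
        U = ⊥ ∨ U = ⊤) := by
  constructor
  · -- existence of the representation
    set f : FreeAlgebra F (Fin 2) →ₐ[F] Module.End F (Fin ℓ → F) :=
      FreeAlgebra.lift F ![Matrix.toLin' Xmat, Matrix.toLin' Pmat] with hf
    have hrelmat := qweyl_mat_rel hq hℓ hodd Xmat Pmat hX hP
    have key : ∀ ⦃a b⦄, QWeylRel F q a b → f a = f b := by
      rintro _ _ ⟨⟩
      simp only [hf, map_add, map_smul, map_mul, map_one, FreeAlgebra.lift_ι_apply,
        Matrix.cons_val_zero, Matrix.cons_val_one, Matrix.head_cons]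
      have h2 : Matrix.toLin' (Pmat * Xmat)
          = Matrix.toLin' (q ^ 2 • (Xmat * Pmat) + q • (1 : Matrix (Fin ℓ) (Fin ℓ) F)) := by
        rw [hrelmat]
      rw [Matrix.toLin'_mul, map_add, map_smul, map_smul, Matrix.toLin'_mul,
        Matrix.toLin'_one] at h2
      exact h2
    refine ⟨RingQuot.liftAlgHom F ⟨f, key⟩, ?_, ?_⟩ <;>
      simp [hf, RingQuot.liftAlgHom_mkAlgHom_apply]
  · -- simplicity
    intro U hUX hUD
    by_cases hbot : U = ⊥
    · exact Or.inl hbot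
    right
    obtain ⟨w, hwU, hw0⟩ := (Submodule.ne_bot_iff U).mp hbot
    have hℓ0 : 0 < ℓ := by omega
    have hq0 : q ≠ 0 := hq.ne_zero (by omega)
    have hc : ∀ k : ℕ, 0 < k → k < ℓ → q * ∑ t ∈ Finset.range k, q ^ (2*t) ≠ 0 :=
      fun k h1 h2 => mul_ne_zero hq0 (qweyl_sum_ne hq hℓ hodd h1 h2)
    -- Step 1: find an element of U with nonzero bottom coordinate
    have step1 : ∃ u, u ∈ U ∧ u ⟨0, hℓ0⟩ ≠ 0 := by
      obtain ⟨k, hk⟩ : ∃ k, w k ≠ 0 := by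
        by_contra h
        push_neg at h
        exact hw0 (funext h)
      have main : ∀ n : ℕ, ∀ w : Fin ℓ → F, w ∈ U → ∀ k : Fin ℓ, (k:ℕ) = n → w k ≠ 0 →
          ∃ u, u ∈ U ∧ u ⟨0, hℓ0⟩ ≠ 0 := by
        intro n
        induction n with
        | zero =>
          intro w hwU k hkn hwk
          refine ⟨w, hwU, ?_⟩
          rwa [show (⟨0, hℓ0⟩ : Fin ℓ) = k from Fin.ext hkn.symm]
        | succ n ih =>
          intro w hwU k hkn hwk
          have hn : n < ℓ := by have := k.isLt; omega
          apply ih (Matrix.toLin' Pmat w) (hUD w hwU) ⟨n, hn⟩ rfl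
          rw [qweyl_D_app Pmat hP w ⟨n, hn⟩ k (show (k:ℕ) = n + 1 from hkn)]
          exact mul_ne_zero (hc (n+1) (Nat.succ_pos n) (by omega)) hwk
      exact main (k:ℕ) w hwU k rfl hk
    obtain ⟨u0, hu0U, hu00⟩ := step1
    -- Step 2: find an element of U concentrated at the top with nonzero top coordinate
    have step2 : ∀ n : ℕ, ∀ hn : n < ℓ, ∃ u, u ∈ U ∧ u ⟨n, hn⟩ ≠ 0 ∧
        ∀ j : Fin ℓ, (j:ℕ) < n → u j = 0 := by
      intro n
      induction n with
      | zero =>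
        intro hn
        exact ⟨u0, hu0U, hu00, fun j hj => absurd hj (by omega)⟩
      | succ n ih =>
        intro hn
        obtain ⟨u, huU, hun, hulow⟩ := ih (by omega)
        refine ⟨Matrix.toLin' Xmat u, hUX u huU, ?_, ?_⟩
        · rw [qweyl_T_app Xmat hX u ⟨n+1, hn⟩ ⟨n, by omega⟩ rfl]
          exact hun
        · intro j hj
          by_cases hj0 : (j:ℕ) = 0
          · exact qweyl_T_app0 Xmat hX u j hj0
          · have hj1 : (j:ℕ) - 1 < ℓ := by omega
            rw [qweyl_T_app Xmat hX u j ⟨(j:ℕ)-1, hj1⟩ (show (j:ℕ) = (j:ℕ)-1+1 by omega)]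
            exact hulow _ (show (j:ℕ)-1 < n by omega)
    have hℓ1 : ℓ - 1 < ℓ := by omega
    obtain ⟨u, huU, hutop, hulow⟩ := step2 (ℓ-1) hℓ1
    have htop : (Pi.single (⟨ℓ-1, hℓ1⟩ : Fin ℓ) 1 : Fin ℓ → F) ∈ U := by
      have heq : (Pi.single (⟨ℓ-1, hℓ1⟩ : Fin ℓ) 1 : Fin ℓ → F) = (u ⟨ℓ-1, hℓ1⟩)⁻¹ • u := by
        funext j
        rw [Pi.smul_apply]
        by_cases hj : j = ⟨ℓ-1, hℓ1⟩
        · subst hj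
          rw [Pi.single_eq_same, smul_eq_mul, inv_mul_cancel₀ hutop]
        · have hjlt : (j:ℕ) < ℓ - 1 := by
            have h1 := j.isLt
            have h2 : (j:ℕ) ≠ ℓ-1 := fun h => hj (Fin.ext h)
            omega
          rw [Pi.single_eq_of_ne hj, hulow j hjlt, smul_zero]
      rw [heq]
      exact U.smul_mem _ huU
    -- Step 3: all basis vectors are in U
    have down : ∀ m : ℕ, m < ℓ → ∀ k : Fin ℓ, (k:ℕ) = ℓ-1-m → (Pi.single k 1 : Fin ℓ → F) ∈ U := by
      intro m
      induction m with
      | zero =>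
        intro _ k hk
        rw [show k = (⟨ℓ-1, hℓ1⟩ : Fin ℓ) from Fin.ext (show (k:ℕ) = ℓ-1 by omega)]
        exact htop
      | succ m ih =>
        intro hm k hk
        have hkk0 : 0 < ℓ - 1 - m := by omega
        have hkklt : ℓ - 1 - m < ℓ := by omega
        have hmem : (Pi.single (⟨ℓ-1-m, hkklt⟩ : Fin ℓ) 1 : Fin ℓ → F) ∈ U := ih (by omega) _ rfl
        set c := q * ∑ t ∈ Finset.range ((k:ℕ)+1), q ^ (2*t) with hcdef
        have hcne : c ≠ 0 := by
          have h' := hc (ℓ-1-m) hkk0 hkklt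
          rwa [show ℓ-1-m = (k:ℕ)+1 by omega] at h'
        have heq : Matrix.toLin' Pmat (Pi.single (⟨ℓ-1-m, hkklt⟩ : Fin ℓ) 1)
            = c • (Pi.single k 1 : Fin ℓ → F) := by
          funext i
          rw [Pi.smul_apply]
          by_cases hi : i = k
          · subst hi
            rw [qweyl_D_app Pmat hP _ i ⟨ℓ-1-m, hkklt⟩ (show ℓ-1-m = (i:ℕ)+1 by omega),
              Pi.single_eq_same, Pi.single_eq_same, mul_one, smul_eq_mul, mul_one]
          · rw [Pi.single_eq_of_ne hi, smul_zero]
            by_cases htop2 : (i:ℕ) + 1 = ℓ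
            · exact qweyl_D_app0 Pmat hP _ i htop2
            · have hlt2 : (i:ℕ)+1 < ℓ := by have := i.isLt; omega
              rw [qweyl_D_app Pmat hP _ i ⟨(i:ℕ)+1, hlt2⟩ rfl,
                Pi.single_eq_of_ne, mul_zero]
              intro hh
              have h2 : (i:ℕ)+1 = ℓ-1-m := congrArg Fin.val hh
              exact hi (Fin.ext (by omega))
        have hfin : (Pi.single k 1 : Fin ℓ → F)
            = c⁻¹ • Matrix.toLin' Pmat (Pi.single (⟨ℓ-1-m, hkklt⟩ : Fin ℓ) 1) := by
          rw [heq, smul_smul, inv_mul_cancel₀ hcne, one_smul]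
        rw [hfin]
        exact U.smul_mem _ (hUD _ hmem)
    have hsingle : ∀ k : Fin ℓ, (Pi.single k 1 : Fin ℓ → F) ∈ U := by
      intro k
      exact down (ℓ-1-(k:ℕ)) (by omega) k (by have := k.isLt; omega)
    rw [Submodule.eq_top_iff']
    intro v
    have hv : v = ∑ i : Fin ℓ, v i • (Pi.single i 1 : Fin ℓ → F) := by
      conv_lhs => rw [← Finset.univ_sum_single v]
      exact Finset.sum_congr rfl fun i _ => by rw [← Pi.single_smul, smul_eq_mul, mul_one]
    rw [hv]
    exact Submodule.sum_mem U fun i _ => U.smul_mem _ (hsingle i)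
end
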